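/- arXiv:2203.13417 — 2 statements merged into one kernel-verified Lean document; each statement's English description precedes it below -/
import Mathlib

section
/- The amortized sliced Wasserstein loss does not satisfy the identity of indiscernibles: there exist a probability measure μ on ℝ^d (d ≥ 1) and a choice of amortized family such that A-SW(μ,μ) > 0. Concretely, for μ = (1/2)δ_{x_1} + (1/2)δ_{x_2} with x_1 ≠ x_2 and m = 2, taking the family to contain the constant function f(X,Y) = (x_1+x_2)/‖x_1+x_2‖ (assuming x_1 + x_2 ≠ 0 and ⟨x_1+x_2, x_1⟩ ≠ ⟨x_1+x_2, x_2⟩), one has A-SW(μ,μ) > 0. -/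
open MeasureTheory ENNReal

noncomputable section

abbrev Rd (d : ℕ) := EuclideanSpace ℝ (Fin d)

/-- Wasserstein-p distance defined via infimum over couplings. -/
def Wp {E : Type*} [MeasurableSpace E] [EDist E] (p : ℝ) (μ ν : Measure E) : ℝ≥0∞ :=
  ⨅ (π : Measure (E × E)) (_ : π.map Prod.fst = μ ∧ π.map Prod.snd = ν),
    (∫⁻ q, edist q.1 q.2 ^ p ∂π) ^ (1 / p)

/-- Empirical measure of an `m`-sample in `ℝ^d`. -/
def emp {d m : ℕ} (X : Fin m → Rd d) : Measure (Rd d) :=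
  (m : ℝ≥0∞)⁻¹ • ∑ i, Measure.dirac (X i)

/-- Pushforward of a measure on `ℝ^d` by the projection `x ↦ ⟨θ, x⟩`. -/
def proj {d : ℕ} (θ : Rd d) (μ : Measure (Rd d)) : Measure ℝ :=
  μ.map (fun x => inner (𝕜 := ℝ) θ x)

/-- The mini-batch measure `μ^{⊗m} ⊗ ν^{⊗m}`. -/
def mb {d : ℕ} (m : ℕ) (μ ν : Measure (Rd d)) :
    Measure ((Fin m → Rd d) × (Fin m → Rd d)) :=
  (Measure.pi fun _ => μ).prod (Measure.pi fun _ => ν)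

/-- Amortized sliced Wasserstein loss for a family of amortized models indexed by `Ψ`. -/
def ASW {d : ℕ} (p : ℝ) (m : ℕ) {Ψ : Type*}
    (f : Ψ → (Fin m → Rd d) → (Fin m → Rd d) → Rd d)
    (μ ν : Measure (Rd d)) : ℝ≥0∞ :=
  ⨆ ψ, ∫⁻ XY, Wp p (proj (f ψ XY.1 XY.2) (emp XY.1)) (proj (f ψ XY.1 XY.2) (emp XY.2))
    ∂(mb m μ ν)

/-- Mini-batch max-sliced Wasserstein loss. -/
def mMaxSW {d : ℕ} (p : ℝ) (m : ℕ) (μ ν : Measure (Rd d)) : ℝ≥0∞ :=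
  ∫⁻ XY, ⨆ θ : Metric.sphere (0 : Rd d) 1,
    Wp p (proj (θ : Rd d) (emp XY.1)) (proj (θ : Rd d) (emp XY.2)) ∂(mb m μ ν)

/-- Max-sliced Wasserstein distance. -/
def MaxSW {d : ℕ} (p : ℝ) (μ ν : Measure (Rd d)) : ℝ≥0∞ :=
  ⨆ θ : Metric.sphere (0 : Rd d) 1, Wp p (proj (θ : Rd d) μ) (proj (θ : Rd d) ν)

/-- Finite p-th moment. -/
def FiniteMoment {E : Type*} [MeasurableSpace E] [NNNorm E] (p : ℝ) (μ : Measure E) : Prop :=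
  ∫⁻ x, (‖x‖₊ : ℝ≥0∞) ^ p ∂μ ≠ ∞

lemma Wp_dirac_pos (p : ℝ) (hp : 1 ≤ p) {a b : ℝ} (hab : a ≠ b) :
    0 < Wp p (Measure.dirac a) (Measure.dirac b) := by
  have hp0 : (0:ℝ) < p := lt_of_lt_of_le one_pos hp
  have hcpos : 0 < (edist a b ^ p) ^ (1/p) := by
    apply ENNReal.rpow_pos
    · exact ENNReal.rpow_pos (edist_pos.mpr hab) (edist_ne_top a b)
    · exact ENNReal.rpow_ne_top_of_nonneg hp0.le (edist_ne_top a b)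
  refine hcpos.trans_le ?_
  refine le_iInf fun π => le_iInf fun hπ => ?_
  obtain ⟨h1, h2⟩ := hπ
  have ha : π (Prod.fst ⁻¹' ({a}ᶜ : Set ℝ)) = 0 := by
    have := congrArg (fun m : Measure ℝ => m ({a}ᶜ)) h1
    simpa [Measure.map_apply measurable_fst (measurableSet_singleton a).compl,
      Measure.dirac_apply] using this
  have hb : π (Prod.snd ⁻¹' ({b}ᶜ : Set ℝ)) = 0 := by
    have := congrArg (fun m : Measure ℝ => m ({b}ᶜ)) h2
    simpa [Measure.map_apply measurable_snd (measurableSet_singleton b).compl,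
      Measure.dirac_apply] using this
  have huniv : π Set.univ = 1 := by
    have := congrArg (fun m : Measure ℝ => m Set.univ) h1
    simpa [Measure.map_apply measurable_fst MeasurableSet.univ] using this
  have hae : ∀ᵐ q ∂π, edist q.1 q.2 ^ p = edist a b ^ p := by
    have h1' : ∀ᵐ q : ℝ × ℝ ∂π, q.1 = a := by
      rw [MeasureTheory.ae_iff]; simpa [Set.preimage] using ha
    have h2' : ∀ᵐ q : ℝ × ℝ ∂π, q.2 = b := by
      rw [MeasureTheory.ae_iff]; simpa [Set.preimage] using hb
    filter_upwards [h1', h2'] with q hq1 hq2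
    rw [hq1, hq2]
  rw [lintegral_congr_ae hae, lintegral_const, huniv, mul_one]

lemma emp_const {d : ℕ} (x : Rd d) : emp (fun _ : Fin 2 => x) = Measure.dirac x := by
  ext s hs
  simp only [emp, Measure.smul_apply, Measure.coe_finset_sum, Finset.sum_apply, smul_eq_mul]
  rw [Fin.sum_univ_two]
  rw [show Measure.dirac x s + Measure.dirac x s = 2 * Measure.dirac x s by ring,
    ← mul_assoc, show ((2:ℕ):ℝ≥0∞) = 2 from by norm_num,
    ENNReal.inv_mul_cancel two_ne_zero ENNReal.ofNat_ne_top, one_mul]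

theorem asw_not_identity {d : ℕ} (p : ℝ) (hp : 1 ≤ p) (hd : 1 ≤ d)
    (x₁ x₂ : Rd d) (hne : x₁ ≠ x₂) (hsum : x₁ + x₂ ≠ 0)
    (hproj : (inner (𝕜 := ℝ) (x₁ + x₂) x₁ : ℝ) ≠ (inner (𝕜 := ℝ) (x₁ + x₂) x₂ : ℝ)) :
    0 < ASW p 2 (fun (_ : Unit) (_ _ : Fin 2 → Rd d) => ‖x₁ + x₂‖⁻¹ • (x₁ + x₂))
      ((2 : ℝ≥0∞)⁻¹ • Measure.dirac x₁ + (2 : ℝ≥0∞)⁻¹ • Measure.dirac x₂)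
      ((2 : ℝ≥0∞)⁻¹ • Measure.dirac x₁ + (2 : ℝ≥0∞)⁻¹ • Measure.dirac x₂) := by
  set μ : Measure (Rd d) :=
    (2 : ℝ≥0∞)⁻¹ • Measure.dirac x₁ + (2 : ℝ≥0∞)⁻¹ • Measure.dirac x₂ with hμ
  set θ : Rd d := ‖x₁ + x₂‖⁻¹ • (x₁ + x₂) with hθ
  set a : ℝ := inner (𝕜 := ℝ) θ x₁ with haa
  set b : ℝ := inner (𝕜 := ℝ) θ x₂ with hbb
  have hab : a ≠ b := by
    have hn : (‖x₁ + x₂‖⁻¹ : ℝ) ≠ 0 := inv_ne_zero (norm_ne_zero_iff.mpr hsum)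
    simp only [haa, hbb, hθ, real_inner_smul_left]
    exact fun h => hproj (mul_left_cancel₀ hn h)
  have hinner : Measurable (fun x : Rd d => inner (𝕜 := ℝ) θ x) :=
    (measurable_const.inner measurable_id)
  -- μ is a probability measure
  haveI : IsProbabilityMeasure μ := by
    constructor
    simp only [hμ, Measure.add_apply, Measure.smul_apply, Measure.dirac_apply_of_mem
      (Set.mem_univ _), smul_eq_mul, mul_one]
    exact ENNReal.inv_two_add_inv_two
  -- the key point
  set X₀ : Fin 2 → Rd d := fun _ => x₁ with hX₀
  set Y₀ : Fin 2 → Rd d := fun _ => x₂ with hY₀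
  have hμ1 : μ {x₁} = 2⁻¹ := by
    simp [hμ, Measure.dirac_apply, Set.indicator, hne, Ne.symm hne]
  have hμ2 : μ {x₂} = 2⁻¹ := by
    simp [hμ, Measure.dirac_apply, Set.indicator, hne, Ne.symm hne]
  have hSpos : 0 < mb 2 μ μ {(X₀, Y₀)} := by
    rw [show ({(X₀, Y₀)} : Set _) = {X₀} ×ˢ {Y₀} by simp [Set.singleton_prod_singleton]]
    rw [mb, Measure.prod_prod]
    rw [show ({X₀} : Set (Fin 2 → Rd d)) = Set.pi Set.univ (fun _ => {x₁}) by
        ext f; simp [hX₀, Set.mem_univ_pi, funext_iff],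
      show ({Y₀} : Set (Fin 2 → Rd d)) = Set.pi Set.univ (fun _ => {x₂}) by
        ext f; simp [hY₀, Set.mem_univ_pi, funext_iff]]
    rw [Measure.pi_pi, Measure.pi_pi]
    simp only [hμ1, hμ2, Finset.prod_const, Finset.card_univ, Fintype.card_fin]
    exact ENNReal.mul_pos (pow_ne_zero 2 (ENNReal.inv_ne_zero.mpr ENNReal.ofNat_ne_top)) (pow_ne_zero 2 (ENNReal.inv_ne_zero.mpr ENNReal.ofNat_ne_top))
  have hW : 0 < Wp p (Measure.dirac a) (Measure.dirac b) := Wp_dirac_pos p hp hab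
  have hval : ∀ XY : (Fin 2 → Rd d) × (Fin 2 → Rd d), XY ∈ ({(X₀, Y₀)} : Set _) →
      Wp p (proj θ (emp XY.1)) (proj θ (emp XY.2))
        = Wp p (Measure.dirac a) (Measure.dirac b) := by
    rintro XY hXY
    rw [Set.mem_singleton_iff] at hXY
    subst hXY
    rw [show emp X₀ = Measure.dirac x₁ from emp_const x₁,
      show emp Y₀ = Measure.dirac x₂ from emp_const x₂]
    rw [proj, proj, Measure.map_dirac' hinner, Measure.map_dirac' hinner]
  refine lt_of_lt_of_le ?_ (le_iSup _ ())
  haveI : MeasurableSingletonClass (Rd d) := inferInstance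
  have hSmeas : MeasurableSet ({(X₀, Y₀)} : Set ((Fin 2 → Rd d) × (Fin 2 → Rd d))) :=
    measurableSet_singleton _
  have hlow : (Set.indicator {(X₀, Y₀)}
      (fun _ => Wp p (Measure.dirac a) (Measure.dirac b))) ≤
      fun XY => Wp p (proj θ (emp XY.1)) (proj θ (emp XY.2)) := by
    intro XY
    by_cases h : XY ∈ ({(X₀, Y₀)} : Set _)
    · rw [Set.indicator_of_mem h]; exact (hval XY h).ge
    · rw [Set.indicator_of_notMem h]; exact zero_le
  calc 0 < Wp p (Measure.dirac a) (Measure.dirac b) * mb 2 μ μ {(X₀, Y₀)} :=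
        ENNReal.mul_pos hW.ne' hSpos.ne'
    _ = ∫⁻ XY, Set.indicator {(X₀, Y₀)}
          (fun _ => Wp p (Measure.dirac a) (Measure.dirac b)) XY ∂(mb 2 μ μ) := by
        rw [lintegral_indicator hSmeas, setLIntegral_const, mul_comm]
    _ ≤ _ := lintegral_mono hlow
end
end

section
/- For probability measures μ, ν on ℝ with finite p-th moments (p ≥ 1), the Wasserstein-p distance admits the closed form W_p(μ,ν) = (∫_0^1 |F_μ^{-1}(z) − F_ν^{-1}(z)|^p dz)^{1/p}, where F_μ^{-1} is the quantile function (generalized inverse of the CDF) of μ. -/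
open MeasureTheory ENNReal

noncomputable section

/-- Cumulative distribution function. -/
def cdf' (μ : Measure ℝ) (t : ℝ) : ℝ := (μ (Set.Iic t)).toReal

/-- Quantile function (generalized inverse of the CDF). -/
def quantile (μ : Measure ℝ) (z : ℝ) : ℝ := sInf {t : ℝ | z ≤ cdf' μ t}

section Aux
open Set
variable (μ : Measure ℝ) [IsProbabilityMeasure μ]

lemma cdf'_nonneg (t : ℝ) : 0 ≤ cdf' μ t := ENNReal.toReal_nonneg

lemma cdf'_le_one (t : ℝ) : cdf' μ t ≤ 1 := by
  have h := prob_le_one (μ := μ) (s := Set.Iic t)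
  simpa [cdf'] using ENNReal.toReal_le_of_le_ofReal zero_le_one (by simpa using h)

lemma cdf'_mono : Monotone (cdf' μ) := fun a b hab =>
  ENNReal.toReal_mono (measure_ne_top μ _) (measure_mono (Iic_subset_Iic.2 hab))

lemma measure_Iic_eq (t : ℝ) : μ (Set.Iic t) = ENNReal.ofReal (cdf' μ t) :=
  (ENNReal.ofReal_toReal (measure_ne_top μ _)).symm

-- right continuity
lemma cdf'_right_cont (q : ℝ) :
    Filter.Tendsto (fun n : ℕ => cdf' μ (q + 1 / (n + 1))) Filter.atTop (nhds (cdf' μ q)) := by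
  have h1 : Filter.Tendsto (fun n : ℕ => μ (Set.Iic (q + 1 / (n + 1)))) Filter.atTop
      (nhds (μ (⋂ n : ℕ, Set.Iic (q + 1 / (n + 1))))) := by
    refine tendsto_measure_iInter_atTop (fun n => (measurableSet_Iic).nullMeasurableSet)
      (fun a b hab => Iic_subset_Iic.2 (by
        have : (1 : ℝ) / (b + 1) ≤ 1 / (a + 1) := by
          apply one_div_le_one_div_of_le (by positivity) (by exact_mod_cast by omega)
        linarith)) ⟨0, measure_ne_top μ _⟩
  have h2 : (⋂ n : ℕ, Set.Iic (q + 1 / ((n : ℝ) + 1))) = Set.Iic q := by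
    ext x
    simp only [Set.mem_iInter, Set.mem_Iic]
    constructor
    · intro h
      by_contra hx
      push_neg at hx
      obtain ⟨n, hn⟩ := exists_nat_one_div_lt (show (0:ℝ) < x - q by linarith)
      have := h n
      linarith
    · intro h n
      have : (0:ℝ) < 1 / (n + 1) := by positivity
      linarith
  rw [h2] at h1
  exact (ENNReal.tendsto_toReal (measure_ne_top μ _)).comp h1

lemma quantile_set_nonempty {z : ℝ} (hz : z < 1) : {t : ℝ | z ≤ cdf' μ t}.Nonempty := by
  have h1 : Filter.Tendsto (fun t : ℝ => μ (Set.Iic t)) Filter.atTop (nhds (μ Set.univ)) :=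
    tendsto_measure_Iic_atTop μ
  have h2 : Filter.Tendsto (fun t : ℝ => cdf' μ t) Filter.atTop (nhds 1) := by
    have := (ENNReal.tendsto_toReal (measure_ne_top μ Set.univ)).comp h1
    simpa [cdf', measure_univ, Function.comp_def] using this
  obtain ⟨t, ht⟩ := (h2.eventually (eventually_ge_nhds hz)).exists
  exact ⟨t, ht⟩

lemma exists_cdf'_lt {z : ℝ} (hz : 0 < z) : ∃ t₀, cdf' μ t₀ < z := by
  have h1 : Filter.Tendsto (fun t : ℝ => μ (Set.Iic t)) Filter.atBot
      (nhds (μ (⋂ t : ℝ, Set.Iic t))) :=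
    tendsto_measure_iInter_atBot (fun t => measurableSet_Iic.nullMeasurableSet)
      monotone_Iic ⟨0, measure_ne_top μ _⟩
  have h0 : (⋂ t : ℝ, Set.Iic t) = (∅ : Set ℝ) := by
    ext x; simp only [Set.mem_iInter, Set.mem_Iic, Set.mem_empty_iff_false, iff_false]
    push_neg; exact ⟨x - 1, by linarith⟩
  rw [h0] at h1
  have h2 : Filter.Tendsto (fun t : ℝ => cdf' μ t) Filter.atBot (nhds 0) := by
    have := (ENNReal.tendsto_toReal (by simp : (0:ℝ≥0∞) ≠ ⊤)).comp (by simpa using h1)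
    simpa [cdf', Function.comp_def] using this
  exact (h2.eventually (eventually_lt_nhds hz)).exists

lemma quantile_set_bddBelow {z : ℝ} (hz : 0 < z) : BddBelow {t : ℝ | z ≤ cdf' μ t} := by
  obtain ⟨t₀, ht₀⟩ := exists_cdf'_lt μ hz
  refine ⟨t₀, fun t ht => ?_⟩
  by_contra h
  push_neg at h
  exact absurd (le_trans ht (cdf'_mono μ h.le)) (not_le.2 ht₀)

lemma le_cdf'_quantile {z : ℝ} (hz0 : 0 < z) (hz1 : z < 1) : z ≤ cdf' μ (quantile μ z) := by
  set q := quantile μ z with hq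
  have hne := quantile_set_nonempty μ hz1
  have hbdd := quantile_set_bddBelow μ hz0
  have key : ∀ n : ℕ, z ≤ cdf' μ (q + 1 / (n + 1)) := by
    intro n
    have hlt : (0:ℝ) < 1 / (n + 1) := by positivity
    obtain ⟨t, ht, htlt⟩ := Real.lt_sInf_add_pos hne hlt
    exact le_trans ht (cdf'_mono μ (by have hd : quantile μ z = sInf {t : ℝ | z ≤ cdf' μ t} := rfl; rw [hq, hd]; linarith))
  exact ge_of_tendsto (cdf'_right_cont μ q) (Filter.Eventually.of_forall key)

lemma quantile_le_iff {z s : ℝ} (hz0 : 0 < z) (hz1 : z < 1) :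
    quantile μ z ≤ s ↔ z ≤ cdf' μ s := by
  constructor
  · intro h
    exact le_trans (le_cdf'_quantile μ hz0 hz1) (cdf'_mono μ h)
  · intro h
    exact csInf_le (quantile_set_bddBelow μ hz0) h

lemma quantile_eq_zero_of_nonpos {z : ℝ} (hz : z ≤ 0) : quantile μ z = 0 := by
  have h : {t : ℝ | z ≤ cdf' μ t} = Set.univ := by
    ext t; simp only [Set.mem_setOf_eq, Set.mem_univ, iff_true]
    exact le_trans hz (cdf'_nonneg μ t)
  rw [quantile, h]
  exact Real.sInf_of_not_bddBelow (by
    rintro ⟨b, hb⟩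
    exact absurd (hb (Set.mem_univ (b - 1))) (by norm_num))

lemma quantile_eq_zero_of_gt_one {z : ℝ} (hz : 1 < z) : quantile μ z = 0 := by
  have h : {t : ℝ | z ≤ cdf' μ t} = ∅ := by
    ext t; simp only [Set.mem_setOf_eq, Set.mem_empty_iff_false, iff_false, not_le]
    exact lt_of_le_of_lt (cdf'_le_one μ t) hz
  rw [quantile, h, Real.sInf_empty]

lemma measurable_quantile : Measurable (quantile μ) := by
  apply measurable_of_Iic
  intro s
  have hset : quantile μ ⁻¹' Set.Iic s =
      ({z : ℝ | (z ≤ 0 ∨ 1 < z) ∧ 0 ≤ s}) ∪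
      ({z : ℝ | z = 1 ∧ quantile μ 1 ≤ s}) ∪
      (Set.Ioo (0:ℝ) 1 ∩ Set.Iic (cdf' μ s)) := by
    ext z
    simp only [Set.mem_preimage, Set.mem_Iic, Set.mem_union, Set.mem_setOf_eq,
      Set.mem_inter_iff, Set.mem_Ioo]
    constructor
    · intro h
      rcases le_or_gt z 0 with hz | hz
      · left; left; exact ⟨Or.inl hz, by rwa [quantile_eq_zero_of_nonpos μ hz] at h⟩
      · rcases lt_trichotomy z 1 with hz1 | hz1 | hz1
        · right; exact ⟨⟨hz, hz1⟩, (quantile_le_iff μ hz hz1).1 h⟩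
        · left; right; exact ⟨hz1, hz1 ▸ h⟩
        · left; left; exact ⟨Or.inr hz1, by rwa [quantile_eq_zero_of_gt_one μ hz1] at h⟩
    · rintro ((⟨hz, hs⟩ | ⟨hz, hs⟩) | ⟨⟨hz0, hz1⟩, hz⟩)
      · rcases hz with hz | hz
        · rwa [quantile_eq_zero_of_nonpos μ hz]
        · rwa [quantile_eq_zero_of_gt_one μ hz]
      · rw [hz]; exact hs
      · exact (quantile_le_iff μ hz0 hz1).2 hz
  rw [hset]
  refine ((MeasurableSet.union ?_ ?_).union (measurableSet_Ioo.inter measurableSet_Iic))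
  · rcases le_or_gt 0 s with h | h
    · simp only [h, and_true]
      exact (measurableSet_Iic.union measurableSet_Ioi)
    · simp only [not_le.2 h, and_false, Set.setOf_false]
      exact MeasurableSet.empty
  · rcases le_or_gt (quantile μ 1) s with h | h
    · simp only [h, and_true, Set.setOf_eq_eq_singleton]
      exact measurableSet_singleton 1
    · simp only [not_le.2 h, and_false, Set.setOf_false]
      exact MeasurableSet.empty

lemma map_quantile :
    (volume.restrict (Set.Ioo (0:ℝ) 1)).map (quantile μ) = μ := by
  have hmq := measurable_quantile μ
  haveI : IsProbabilityMeasure (volume.restrict (Set.Ioo (0:ℝ) 1)) := by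
    constructor; simp
  haveI : IsProbabilityMeasure ((volume.restrict (Set.Ioo (0:ℝ) 1)).map (quantile μ)) :=
    Measure.isProbabilityMeasure_map hmq.aemeasurable
  refine Measure.ext_of_Iic _ _ (fun s => ?_)
  rw [Measure.map_apply hmq measurableSet_Iic,
    Measure.restrict_apply (hmq measurableSet_Iic)]
  have hF0 : 0 ≤ cdf' μ s := cdf'_nonneg μ s
  have hF1 : cdf' μ s ≤ 1 := cdf'_le_one μ s
  have hseteq : quantile μ ⁻¹' Set.Iic s ∩ Set.Ioo 0 1 =
      Set.Ioc (0:ℝ) (cdf' μ s) ∩ Set.Iio 1 := by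
    ext z
    simp only [Set.mem_inter_iff, Set.mem_preimage, Set.mem_Iic, Set.mem_Ioo,
      Set.mem_Ioc, Set.mem_Iio]
    constructor
    · rintro ⟨h, hz0, hz1⟩
      exact ⟨⟨hz0, (quantile_le_iff μ hz0 hz1).1 h⟩, hz1⟩
    · rintro ⟨⟨hz0, hzF⟩, hz1⟩
      exact ⟨(quantile_le_iff μ hz0 hz1).2 hzF, hz0, hz1⟩
  rw [hseteq, measure_Iic_eq μ s]
  rcases lt_or_ge (cdf' μ s) 1 with h | h
  · rw [Set.inter_eq_self_of_subset_left
      (show Set.Ioc (0:ℝ) (cdf' μ s) ⊆ Set.Iio 1 from fun z hz => lt_of_le_of_lt hz.2 h)]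
    simp [Real.volume_Ioc, hF0]
  · have h1 : cdf' μ s = 1 := le_antisymm hF1 h
    have : Set.Ioc (0:ℝ) (cdf' μ s) ∩ Set.Iio 1 = Set.Ioo (0:ℝ) 1 := by
      rw [h1]; ext z
      simp only [Set.mem_inter_iff, Set.mem_Ioc, Set.mem_Iio, Set.mem_Ioo]
      exact ⟨fun h => ⟨h.1.1, h.2⟩, fun h => ⟨⟨h.1, h.2.le⟩, h.2⟩⟩
    rw [this, h1]
    simp [Real.volume_Ioo]

section Rep
variable {Ω : Type*} [MeasurableSpace Ω]

lemma rep_lemma (ρ : Measure Ω) [SFinite ρ] {X Y : Ω → ℝ}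
    (hX : Measurable X) (hY : Measurable Y) (t : ℝ) :
    ∫⁻ ω, ENNReal.ofReal (X ω - Y ω - t) ∂ρ
      = ∫⁻ r, ρ {ω | Y ω ≤ r ∧ r + t < X ω} := by
  set s : Set (Ω × ℝ) := {q | Y q.1 ≤ q.2 ∧ q.2 + t < X q.1} with hs
  have hsm : MeasurableSet s :=
    (measurableSet_le (hY.comp measurable_fst) measurable_snd).inter
      (measurableSet_lt (measurable_snd.add_const t) (hX.comp measurable_fst))
  have h1 : ∀ ω, (Prod.mk ω ⁻¹' s) = Set.Ico (Y ω) (X ω - t) := by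
    intro ω
    ext r
    simp only [Set.mem_preimage, hs, Set.mem_setOf_eq, Set.mem_Ico]
    exact ⟨fun h => ⟨h.1, by linarith [h.2]⟩, fun h => ⟨h.1, by linarith [h.2]⟩⟩
  have h2 : (ρ.prod volume) s = ∫⁻ ω, ENNReal.ofReal (X ω - Y ω - t) ∂ρ := by
    rw [Measure.prod_apply hsm]
    congr 1
    ext ω
    rw [h1 ω, Real.volume_Ico]
    congr 1
    ring
  have h3 : (ρ.prod volume) s = ∫⁻ r, ρ ((fun ω => (ω, r)) ⁻¹' s) := by
    exact Measure.prod_apply_symm hsm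
  rw [← h2, h3]
  rfl
end Rep

variable (ν : Measure ℝ) [IsProbabilityMeasure ν]

lemma lambda_side (r t : ℝ) :
    (volume.restrict (Set.Ioo (0:ℝ) 1)) {z | quantile ν z ≤ r ∧ r + t < quantile μ z}
      = ENNReal.ofReal (cdf' ν r - cdf' μ (r + t)) := by
  set F := cdf' μ (r + t) with hF
  set G := cdf' ν r with hG
  have hmA : MeasurableSet {z | quantile ν z ≤ r ∧ r + t < quantile μ z} :=
    ((measurable_quantile ν) measurableSet_Iic).inter
      (measurableSet_lt measurable_const (measurable_quantile μ))
  rw [Measure.restrict_apply hmA]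
  have hseteq : {z | quantile ν z ≤ r ∧ r + t < quantile μ z} ∩ Set.Ioo 0 1
      = Set.Ioo (0:ℝ) 1 ∩ Set.Ioc F G := by
    ext z
    simp only [Set.mem_inter_iff, Set.mem_setOf_eq, Set.mem_Ioo, Set.mem_Ioc]
    constructor
    · rintro ⟨⟨h1, h2⟩, hz0, hz1⟩
      refine ⟨⟨hz0, hz1⟩, ?_, (quantile_le_iff ν hz0 hz1).1 h1⟩
      by_contra hc
      push_neg at hc
      exact absurd ((quantile_le_iff μ hz0 hz1).2 hc) (not_le.2 h2)
    · rintro ⟨⟨hz0, hz1⟩, hFz, hzG⟩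
      refine ⟨⟨(quantile_le_iff ν hz0 hz1).2 hzG, ?_⟩, hz0, hz1⟩
      by_contra hc
      push_neg at hc
      exact absurd ((quantile_le_iff μ hz0 hz1).1 hc) (not_le.2 hFz)
  rw [hseteq]
  rcases le_or_gt G F with h | h
  · rw [Set.Ioc_eq_empty (not_lt.2 h), Set.inter_empty, measure_empty]
    exact (ENNReal.ofReal_eq_zero.2 (by linarith : G - F ≤ 0)).symm
  · have hF0 : 0 ≤ F := cdf'_nonneg μ _
    have hG1 : G ≤ 1 := cdf'_le_one ν _
    apply le_antisymm
    · calc volume (Set.Ioo (0:ℝ) 1 ∩ Set.Ioc F G) ≤ volume (Set.Ioc F G) :=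
            measure_mono Set.inter_subset_right
        _ = ENNReal.ofReal (G - F) := Real.volume_Ioc
    · calc ENNReal.ofReal (G - F) = volume (Set.Ioo F G) := Real.volume_Ioo.symm
        _ ≤ volume (Set.Ioo (0:ℝ) 1 ∩ Set.Ioc F G) := by
            apply measure_mono
            rintro z ⟨hz1, hz2⟩
            exact ⟨⟨lt_of_le_of_lt hF0 hz1, lt_of_lt_of_le hz2 hG1⟩, hz1, hz2.le⟩

lemma pi_side (π : Measure (ℝ × ℝ)) (h1 : π.map Prod.fst = μ) (h2 : π.map Prod.snd = ν)
    (r t : ℝ) :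
    ENNReal.ofReal (cdf' ν r - cdf' μ (r + t)) ≤ π {q | q.2 ≤ r ∧ r + t < q.1} := by
  haveI : IsProbabilityMeasure π := by
    constructor
    have : π.map Prod.fst Set.univ = 1 := by rw [h1]; exact measure_univ
    rwa [Measure.map_apply measurable_fst MeasurableSet.univ, Set.preimage_univ] at this
  have hB : π {q : ℝ × ℝ | q.2 ≤ r} = ENNReal.ofReal (cdf' ν r) := by
    have := Measure.map_apply (μ := π) measurable_snd (measurableSet_Iic (a := r))
    rw [h2, measure_Iic_eq ν r] at this
    exact this.symm
  have hA : π {q : ℝ × ℝ | q.1 ≤ r + t} = ENNReal.ofReal (cdf' μ (r + t)) := by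
    have := Measure.map_apply (μ := π) measurable_fst (measurableSet_Iic (a := r + t))
    rw [h1, measure_Iic_eq μ _] at this
    exact this.symm
  have hsub : {q : ℝ × ℝ | q.2 ≤ r} ⊆
      {q : ℝ × ℝ | q.2 ≤ r ∧ r + t < q.1} ∪ {q : ℝ × ℝ | q.1 ≤ r + t} := by
    intro q hq
    rcases le_or_gt q.1 (r + t) with h | h
    · exact Or.inr h
    · exact Or.inl ⟨hq, h⟩
  have hle : ENNReal.ofReal (cdf' ν r) ≤
      π {q : ℝ × ℝ | q.2 ≤ r ∧ r + t < q.1} + ENNReal.ofReal (cdf' μ (r + t)) := by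
    rw [← hB, ← hA]
    exact le_trans (measure_mono hsub) (measure_union_le _ _)
  rw [ENNReal.ofReal_sub _ (cdf'_nonneg μ _)]
  exact tsub_le_iff_right.2 hle

lemma key_ineq (π : Measure (ℝ × ℝ)) (h1 : π.map Prod.fst = μ) (h2 : π.map Prod.snd = ν)
    [SFinite π] (t : ℝ) :
    ∫⁻ z in Set.Ioo (0:ℝ) 1, ENNReal.ofReal (quantile μ z - quantile ν z - t)
      ≤ ∫⁻ q : ℝ × ℝ, ENNReal.ofReal (q.1 - q.2 - t) ∂π := by
  rw [rep_lemma (volume.restrict (Set.Ioo (0:ℝ) 1)) (measurable_quantile μ)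
      (measurable_quantile ν) t,
    rep_lemma π measurable_fst measurable_snd t]
  apply lintegral_mono
  intro r
  dsimp only
  rw [lambda_side μ ν r t]
  exact pi_side μ ν π h1 h2 r t

section Hinge
variable {p : ℝ}

lemma hinge_integrableOn (hp : 1 < p) (a : ℝ) (ha : 0 ≤ a) :
    IntegrableOn (fun t => p * (p-1) * t ^ (p-2) * max (a - t) 0) (Set.Ioi (0:ℝ)) := by
  have h2 : IntervalIntegrable (fun t : ℝ => t ^ (p-2)) volume 0 a :=
    intervalIntegral.intervalIntegrable_rpow' (by linarith)
  have h2' : IntegrableOn (fun t : ℝ => t ^ (p-2)) (Set.Ioc 0 a) volume :=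
    (intervalIntegrable_iff_integrableOn_Ioc_of_le ha).1 h2
  have hIoc : IntegrableOn (fun t => p * (p-1) * t ^ (p-2) * max (a - t) 0)
      (Set.Ioc (0:ℝ) a) := by
    have hb : IntegrableOn (fun t : ℝ => p * (p-1) * a * t ^ (p-2)) (Set.Ioc 0 a) volume :=
      (h2'.const_mul _)
    apply Integrable.mono' hb
    · apply AEMeasurable.aestronglyMeasurable
      apply AEMeasurable.mul
      · exact (aemeasurable_const.mul (Measurable.aemeasurable (by measurability)))
      · exact (aemeasurable_const.sub aemeasurable_id').sup aemeasurable_const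
    · filter_upwards [ae_restrict_mem measurableSet_Ioc] with t ht
      have ht0 : (0:ℝ) < t := ht.1
      have hrpow : (0:ℝ) ≤ t ^ (p-2) := Real.rpow_nonneg ht0.le _
      have hmax0 : (0:ℝ) ≤ max (a - t) 0 := le_max_right _ _
      have hmaxa : max (a - t) 0 ≤ a := max_le (by linarith [ht.1]) ha
      have hc : (0:ℝ) ≤ p * (p-1) := by nlinarith
      rw [Real.norm_eq_abs, abs_of_nonneg (mul_nonneg (mul_nonneg hc hrpow) hmax0)]
      calc p * (p-1) * t ^ (p-2) * max (a - t) 0 ≤ p * (p-1) * t ^ (p-2) * a := by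
            exact mul_le_mul_of_nonneg_left hmaxa (mul_nonneg hc hrpow)
        _ = p * (p-1) * a * t ^ (p-2) := by ring
  have hIoi : IntegrableOn (fun t => p * (p-1) * t ^ (p-2) * max (a - t) 0)
      (Set.Ioi a) := by
    apply (integrableOn_congr_fun  _ measurableSet_Ioi).2 (integrableOn_zero)
    intro t ht
    have : a - t ≤ 0 := by simp at ht; linarith
    simp [max_eq_right this]
  have := hIoc.union hIoi
  rwa [Set.Ioc_union_Ioi_eq_Ioi ha] at this

lemma hinge_integral_eq (hp : 1 < p) (a : ℝ) (ha : 0 ≤ a) :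
    ∫ t in Set.Ioi (0:ℝ), p * (p-1) * t ^ (p-2) * max (a - t) 0 = a ^ p := by
  have hp0 : p ≠ 0 := by linarith
  have hp1 : p - 1 ≠ 0 := by linarith
  rcases eq_or_lt_of_le ha with rfl | ha'
  · have h0 : ∀ t ∈ Set.Ioi (0:ℝ), p * (p-1) * t ^ (p-2) * max (0 - t) 0 = 0 := by
      intro t ht
      rw [max_eq_right (by simp only [Set.mem_Ioi] at ht; linarith)]
      ring
    rw [setIntegral_congr_fun measurableSet_Ioi h0]
    simp [Real.zero_rpow hp0]
  · have hIoc : IntegrableOn (fun t => p * (p-1) * t ^ (p-2) * max (a - t) 0)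
        (Set.Ioc (0:ℝ) a) :=
      (hinge_integrableOn hp a ha).mono_set Set.Ioc_subset_Ioi_self
    have hIoi2 : IntegrableOn (fun t => p * (p-1) * t ^ (p-2) * max (a - t) 0)
        (Set.Ioi a) :=
      (hinge_integrableOn hp a ha).mono_set (Set.Ioi_subset_Ioi ha)
    rw [← Set.Ioc_union_Ioi_eq_Ioi ha,
      setIntegral_union (Set.Ioc_disjoint_Ioi le_rfl) measurableSet_Ioi hIoc hIoi2]
    have hz : ∫ t in Set.Ioi a, p * (p-1) * t ^ (p-2) * max (a - t) 0 = 0 := by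
      have h0 : ∀ t ∈ Set.Ioi a, p * (p-1) * t ^ (p-2) * max (a - t) 0 = 0 := by
        intro t ht
        rw [max_eq_right (by simp only [Set.mem_Ioi] at ht; linarith)]
        ring
      rw [setIntegral_congr_fun measurableSet_Ioi h0]
      simp
    rw [hz, add_zero]
    have hcongr : ∀ t ∈ Set.Ioc (0:ℝ) a,
        p * (p-1) * t ^ (p-2) * max (a - t) 0
          = p * (p-1) * a * t ^ (p-2) - p * (p-1) * (t ^ (p-2) * t) := by
      intro t ht
      rw [max_eq_left (by linarith [ht.2])]
      ring
    rw [setIntegral_congr_fun measurableSet_Ioc hcongr,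
      ← intervalIntegral.integral_of_le ha]
    have hInt1 : IntervalIntegrable (fun t : ℝ => t ^ (p-2)) volume 0 a :=
      intervalIntegral.intervalIntegrable_rpow' (by linarith)
    have hInt1' : IntervalIntegrable (fun t : ℝ => p * (p-1) * a * t ^ (p-2)) volume 0 a :=
      hInt1.const_mul _
    have hInt2 : IntervalIntegrable (fun t : ℝ => t ^ (p-1)) volume 0 a :=
      intervalIntegral.intervalIntegrable_rpow' (by linarith)
    have heqi : Set.EqOn (fun t : ℝ => p * (p-1) * (t ^ (p-1)))
        (fun t : ℝ => p * (p-1) * (t ^ (p-2) * t)) (Set.Ioc 0 a) := by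
      intro t ht
      simp only
      rw [show p - 1 = (p-2) + 1 by ring, Real.rpow_add ht.1, Real.rpow_one]
    have hInt2' : IntervalIntegrable (fun t : ℝ => p * (p-1) * (t ^ (p-2) * t)) volume 0 a := by
      rw [intervalIntegrable_iff_integrableOn_Ioc_of_le ha]
      exact (integrableOn_congr_fun heqi measurableSet_Ioc).1
        ((intervalIntegrable_iff_integrableOn_Ioc_of_le ha).1 (hInt2.const_mul _))
    rw [intervalIntegral.integral_sub hInt1' hInt2']
    have e2 : ∫ t in (0:ℝ)..a, p * (p-1) * (t ^ (p-2) * t)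
        = ∫ t in (0:ℝ)..a, p * (p-1) * t ^ (p-1) := by
      rw [intervalIntegral.integral_of_le ha, intervalIntegral.integral_of_le ha]
      exact (setIntegral_congr_fun measurableSet_Ioc (fun t ht => (heqi ht).symm))
    rw [e2, intervalIntegral.integral_const_mul, intervalIntegral.integral_const_mul,
      integral_rpow (Or.inl (by linarith : (-1:ℝ) < p - 2)),
      integral_rpow (Or.inl (by linarith : (-1:ℝ) < p - 1))]
    rw [Real.zero_rpow (by intro h; apply hp1; linarith [h] : p - 2 + 1 ≠ 0),
      Real.zero_rpow (by intro h; apply hp0; linarith [h] : p - 1 + 1 ≠ 0)]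
    rw [sub_zero, sub_zero, show p - 2 + 1 = p - 1 from by ring,
      show p - 1 + 1 = p from by ring]
    have haa : a ^ (p-1) * a = a ^ p := by
      rw [← Real.rpow_add_one (ne_of_gt ha')]
      ring_nf
    field_simp
    linear_combination p * haa

end Hinge

section Decomp
variable {p : ℝ}

lemma hinge_decomp (hp : 1 < p) (u : ℝ) :
    ENNReal.ofReal (|u| ^ p) = ∫⁻ t in Set.Ioi (0:ℝ),
      ENNReal.ofReal (p * (p-1) * t ^ (p-2))
        * (ENNReal.ofReal (u - t) + ENNReal.ofReal (-u - t)) := by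
  have hcongr : ∀ t ∈ Set.Ioi (0:ℝ),
      ENNReal.ofReal (p * (p-1) * t ^ (p-2))
          * (ENNReal.ofReal (u - t) + ENNReal.ofReal (-u - t))
        = ENNReal.ofReal (p * (p-1) * t ^ (p-2) * max (|u| - t) 0) := by
    intro t ht
    simp only [Set.mem_Ioi] at ht
    have hc : (0:ℝ) ≤ p * (p-1) * t ^ (p-2) :=
      mul_nonneg (by nlinarith) (Real.rpow_nonneg ht.le _)
    have hsum : ENNReal.ofReal (u - t) + ENNReal.ofReal (-u - t)
        = ENNReal.ofReal (|u| - t) := by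
      rcases le_or_gt 0 u with hu | hu
      · rw [ENNReal.ofReal_eq_zero.2 (by linarith : -u - t ≤ 0), add_zero,
          abs_of_nonneg hu]
      · rw [ENNReal.ofReal_eq_zero.2 (by linarith : u - t ≤ 0), zero_add,
          abs_of_neg hu]
    rw [hsum, ← ENNReal.ofReal_mul hc]
    rcases le_or_gt 0 (|u| - t) with h | h
    · rw [max_eq_left h]
    · rw [max_eq_right h.le, mul_zero, ENNReal.ofReal_eq_zero.2 (by nlinarith),
        ENNReal.ofReal_zero]
  rw [setLIntegral_congr_fun measurableSet_Ioi hcongr]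
  rw [← ofReal_integral_eq_lintegral_ofReal (hinge_integrableOn hp _ (abs_nonneg u))]
  · rw [hinge_integral_eq hp _ (abs_nonneg u)]
  · filter_upwards [ae_restrict_mem measurableSet_Ioi] with t ht
    simp only [Set.mem_Ioi] at ht
    exact mul_nonneg (mul_nonneg (by nlinarith) (Real.rpow_nonneg ht.le _)) (le_max_right _ _)

lemma main_decomp {Ω : Type*} [MeasurableSpace Ω] (ρ : Measure Ω) [SFinite ρ]
    {X Y : Ω → ℝ} (hX : Measurable X) (hY : Measurable Y) (hp : 1 < p) :
    ∫⁻ ω, ENNReal.ofReal (|X ω - Y ω| ^ p) ∂ρ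
      = ∫⁻ t in Set.Ioi (0:ℝ), ENNReal.ofReal (p * (p-1) * t ^ (p-2))
          * ((∫⁻ ω, ENNReal.ofReal (X ω - Y ω - t) ∂ρ)
            + ∫⁻ ω, ENNReal.ofReal (Y ω - X ω - t) ∂ρ) := by
  have h1 : ∀ ω, ENNReal.ofReal (|X ω - Y ω| ^ p)
      = ∫⁻ t in Set.Ioi (0:ℝ), ENNReal.ofReal (p * (p-1) * t ^ (p-2))
          * (ENNReal.ofReal (X ω - Y ω - t) + ENNReal.ofReal (Y ω - X ω - t)) := by
    intro ω
    have := hinge_decomp hp (X ω - Y ω)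
    simpa [sub_sub, neg_sub] using this
  simp_rw [h1]
  rw [lintegral_lintegral_swap]
  · apply setLIntegral_congr_fun measurableSet_Ioi
    intro t ht
    dsimp only
    rw [lintegral_const_mul' _ _ ENNReal.ofReal_ne_top,
      lintegral_add_left (by measurability)]
  · apply Measurable.aemeasurable
    simp only [Function.uncurry_def]
    refine Measurable.mul (f := fun q : Ω × ℝ => ENNReal.ofReal (p * (p-1) * q.2 ^ (p-2)))
      (g := fun q : Ω × ℝ => ENNReal.ofReal (X q.1 - Y q.1 - q.2) + ENNReal.ofReal (Y q.1 - X q.1 - q.2)) ?_ ?_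
    · exact Measurable.ennreal_ofReal (by measurability)
    · refine Measurable.add (f := fun q : Ω × ℝ => ENNReal.ofReal (X q.1 - Y q.1 - q.2))
        (g := fun q : Ω × ℝ => ENNReal.ofReal (Y q.1 - X q.1 - q.2)) ?_ ?_
      · exact Measurable.ennreal_ofReal
          (((hX.comp measurable_fst).sub (hY.comp measurable_fst)).sub
            (measurable_snd))
      · exact Measurable.ennreal_ofReal
          (((hY.comp measurable_fst).sub (hX.comp measurable_fst)).sub
            (measurable_snd))
end Decomp

lemma core_ineq {p : ℝ} (hp : 1 ≤ p) (π : Measure (ℝ × ℝ))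
    (h1 : π.map Prod.fst = μ) (h2 : π.map Prod.snd = ν) :
    ∫⁻ z in Set.Ioo (0:ℝ) 1, ENNReal.ofReal (|quantile μ z - quantile ν z| ^ p)
      ≤ ∫⁻ q : ℝ × ℝ, ENNReal.ofReal (|q.1 - q.2| ^ p) ∂π := by
  haveI : IsProbabilityMeasure π := by
    constructor
    have h := congrArg (fun m : Measure ℝ => m Set.univ) h1
    simp only [Measure.map_apply measurable_fst MeasurableSet.univ,
      Set.preimage_univ] at h
    rw [h]; exact measure_univ
  set π' : Measure (ℝ × ℝ) := π.map Prod.swap with hπ'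
  have h1' : π'.map Prod.fst = ν := by
    rw [hπ', Measure.map_map measurable_fst measurable_swap]
    exact h2
  have h2' : π'.map Prod.snd = μ := by
    rw [hπ', Measure.map_map measurable_snd measurable_swap]
    exact h1
  haveI : SFinite π' := by
    haveI : IsProbabilityMeasure π' := Measure.isProbabilityMeasure_map measurable_swap.aemeasurable
    infer_instance
  have hswap : ∀ t : ℝ, ∫⁻ q : ℝ × ℝ, ENNReal.ofReal (q.2 - q.1 - t) ∂π
      = ∫⁻ q : ℝ × ℝ, ENNReal.ofReal (q.1 - q.2 - t) ∂π' := by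
    intro t
    rw [hπ', lintegral_map (f := fun q : ℝ × ℝ => ENNReal.ofReal (q.1 - q.2 - t)) (Measurable.ennreal_ofReal
      ((measurable_fst.sub measurable_snd).sub measurable_const)) measurable_swap]
    rfl
  rcases eq_or_lt_of_le hp with hp1 | hp1
  · -- p = 1
    subst hp1
    simp only [Real.rpow_one]
    have habs : ∀ u : ℝ, ENNReal.ofReal |u| = ENNReal.ofReal u + ENNReal.ofReal (-u) := by
      intro u
      rcases le_or_gt 0 u with hu | hu
      · rw [abs_of_nonneg hu,
          show ENNReal.ofReal (-u) = 0 from ENNReal.ofReal_eq_zero.2 (by linarith), add_zero]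
      · rw [abs_of_neg hu,
          show ENNReal.ofReal u = 0 from ENNReal.ofReal_eq_zero.2 hu.le, zero_add]
    simp_rw [habs]
    rw [lintegral_add_left (f := fun z => ENNReal.ofReal (quantile μ z - quantile ν z)) (Measurable.ennreal_ofReal
        (((measurable_quantile μ).sub (measurable_quantile ν)))),
      lintegral_add_left (f := fun q : ℝ × ℝ => ENNReal.ofReal (q.1 - q.2)) (Measurable.ennreal_ofReal (measurable_fst.sub measurable_snd))]
    apply add_le_add
    · have := key_ineq μ ν π h1 h2 0
      simpa using this
    · simp only [neg_sub]
      have := key_ineq ν μ π' h1' h2' 0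
      simp only [sub_zero] at this
      have hs := hswap 0
      simp only [sub_zero] at hs
      rw [hs]
      exact this
  · -- p > 1
    rw [main_decomp (volume.restrict (Set.Ioo (0:ℝ) 1)) (measurable_quantile μ)
        (measurable_quantile ν) hp1,
      main_decomp π measurable_fst measurable_snd hp1]
    apply lintegral_mono_ae
    filter_upwards [ae_restrict_mem measurableSet_Ioi] with t ht
    apply mul_le_mul_right
    apply add_le_add
    · exact key_ineq μ ν π h1 h2 t
    · rw [hswap t]
      exact key_ineq ν μ π' h1' h2' t


end Aux

theorem wp_one_dim_closed_form (p : ℝ) (hp : 1 ≤ p) (μ ν : Measure ℝ)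
    [IsProbabilityMeasure μ] [IsProbabilityMeasure ν]
    (hμ : FiniteMoment p μ) (hν : FiniteMoment p ν) :
    Wp p μ ν
      = (∫⁻ z in Set.Ioo (0 : ℝ) 1, ENNReal.ofReal (|quantile μ z - quantile ν z| ^ p)) ^ (1 / p) := by
  have h0p : (0:ℝ) ≤ p := by linarith
  have hedist : ∀ π : Measure (ℝ × ℝ),
      ∫⁻ q : ℝ × ℝ, edist q.1 q.2 ^ p ∂π
        = ∫⁻ q : ℝ × ℝ, ENNReal.ofReal (|q.1 - q.2| ^ p) ∂π := by
    intro π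
    apply lintegral_congr
    intro q
    rw [edist_dist, Real.dist_eq, ← ENNReal.ofReal_rpow_of_nonneg (abs_nonneg _) h0p]
  have hmeas_pair : Measurable (fun z => (quantile μ z, quantile ν z)) :=
    (measurable_quantile μ).prodMk (measurable_quantile ν)
  set π₀ : Measure (ℝ × ℝ) :=
    (volume.restrict (Set.Ioo (0:ℝ) 1)).map (fun z => (quantile μ z, quantile ν z)) with hπ₀
  have hfst : π₀.map Prod.fst = μ := by
    rw [hπ₀, Measure.map_map measurable_fst hmeas_pair]
    exact map_quantile μ
  have hsnd : π₀.map Prod.snd = ν := by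
    rw [hπ₀, Measure.map_map measurable_snd hmeas_pair]
    exact map_quantile ν
  have hmi : Measurable (fun q : ℝ × ℝ => ENNReal.ofReal (|q.1 - q.2| ^ p)) := by
    measurability
  have hval : ∫⁻ q : ℝ × ℝ, ENNReal.ofReal (|q.1 - q.2| ^ p) ∂π₀
      = ∫⁻ z in Set.Ioo (0:ℝ) 1, ENNReal.ofReal (|quantile μ z - quantile ν z| ^ p) := by
    rw [hπ₀, lintegral_map hmi hmeas_pair]
  apply le_antisymm
  · refine iInf_le_of_le π₀ (le_trans (iInf_le _ ⟨hfst, hsnd⟩) ?_)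
    apply le_of_eq
    rw [hedist π₀, hval]
  · apply le_iInf
    intro π
    apply le_iInf
    rintro ⟨h1, h2⟩
    apply ENNReal.rpow_le_rpow _ (by positivity : (0:ℝ) ≤ 1/p)
    rw [hedist π]
    exact core_ineq μ ν hp π h1 h2
end
end
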